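/- Let Ē₀ > 0, set a₀ = √(8πĒ₀/3), and define on (0,∞): a(η) = a₀η, Φ(η) = Φ̄₀/a(η), θ(η) = θ̄₀/a(η), n(η) = n̄₀/a(η)³, σ(η) = σ̄₀/a(η)³ and E_pl(η) = Ē₀/a(η)⁴ for constants Φ̄₀, θ̄₀, n̄₀, σ̄₀. Then: (1) a satisfies the Friedmann equation 3·a'(η)²/a(η)⁴ = 8π·E_pl(η) for all η > 0; (2) a(η)·Φ(η) = Φ̄₀ is constant, so (d²/dη²)(aΦ) = 0, i.e. Φ solves the massless conformally invariant field equation (1/a³)(aΦ)'' = 0 with vanishing source; and (3) the quantities scale as Φ ∝ η⁻¹, θ ∝ η⁻¹, n ∝ η⁻³, σ ∝ η⁻³, E_pl ∝ η⁻⁴. -/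
import Mathlib


/-- With `a₀ = √(8πĒ₀/3)` and, on `(0,∞)`, `a(η) = a₀η`,
`Φ = Φ̄₀/a`, `θ = θ̄₀/a`, `n = n̄₀/a³`, `σ = σ̄₀/a³`, `E_pl = Ē₀/a⁴`:
(1) the Friedmann equation `3a'²/a⁴ = 8πE_pl` holds;
(2) `a·Φ = Φ̄₀` is constant, so `(aΦ)'' = 0` and `(1/a³)(aΦ)'' = 0`
(the massless conformally invariant field equation with vanishing source);
(3) the quantities scale as `Φ ∝ η⁻¹`, `θ ∝ η⁻¹`, `n ∝ η⁻³`, `σ ∝ η⁻³`,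
`E_pl ∝ η⁻⁴`. -/
theorem stmt_19 (E0 Φ0 θ0 n0 σ0 a0 : ℝ) (hE0 : 0 < E0)
    (ha0 : a0 = Real.sqrt (8 * Real.pi * E0 / 3))
    (a Φ θ n σ Epl : ℝ → ℝ)
    (ha : a = fun η => a0 * η)
    (hΦ : Φ = fun η => Φ0 / a η)
    (hθ : θ = fun η => θ0 / a η)
    (hn : n = fun η => n0 / a η ^ 3)
    (hσ : σ = fun η => σ0 / a η ^ 3)
    (hE : Epl = fun η => E0 / a η ^ 4) :
    (∀ η > 0, 3 * deriv a η ^ 2 / a η ^ 4 = 8 * Real.pi * Epl η) ∧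
    (∀ η > 0, a η * Φ η = Φ0) ∧
    (∀ η > 0, deriv (deriv (fun t => a t * Φ t)) η = 0) ∧
    (∀ η > 0, (1 / a η ^ 3) * deriv (deriv (fun t => a t * Φ t)) η = 0) ∧
    (∀ η > 0, Φ η = (Φ0 / a0) * η⁻¹ ∧ θ η = (θ0 / a0) * η⁻¹ ∧
      n η = (n0 / a0 ^ 3) * (η⁻¹) ^ 3 ∧ σ η = (σ0 / a0 ^ 3) * (η⁻¹) ^ 3 ∧
      Epl η = (E0 / a0 ^ 4) * (η⁻¹) ^ 4) := by
  have hpi : (0:ℝ) < Real.pi := Real.pi_pos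
  have harg : (0:ℝ) < 8 * Real.pi * E0 / 3 := by positivity
  have ha0pos : 0 < a0 := ha0 ▸ Real.sqrt_pos.mpr harg
  have ha0sq : a0 ^ 2 = 8 * Real.pi * E0 / 3 := by
    rw [ha0, Real.sq_sqrt harg.le]
  have hderiva : ∀ η : ℝ, deriv a η = a0 := by
    intro η
    have h : HasDerivAt (fun t : ℝ => a0 * t) a0 η := by
      simpa using (hasDerivAt_id η).const_mul a0
    rw [ha]; exact h.deriv
  have hconst : ∀ η : ℝ, η ≠ 0 →
      (fun t => a t * Φ t) =ᶠ[nhds η] fun _ => Φ0 := by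
    intro η hη
    filter_upwards [eventually_ne_nhds hη] with t ht
    have : a0 * t ≠ 0 := mul_ne_zero ha0pos.ne' ht
    simp only [ha, hΦ]
    field_simp
  have hderiv0 : ∀ η : ℝ, η ≠ 0 → deriv (fun t => a t * Φ t) η = 0 := by
    intro η hη
    rw [(hconst η hη).deriv_eq, deriv_const]
  refine ⟨?_, ?_, ?_, ?_, ?_⟩
  · intro η hη
    rw [hE, hderiva]
    have hηne : η ≠ 0 := hη.ne'
    have haη : a0 * η ≠ 0 := mul_ne_zero ha0pos.ne' hηne
    simp only [ha]
    field_simp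
    nlinarith [ha0sq, sq_nonneg (a0 * η)]
  · intro η hη
    have haη : a0 * η ≠ 0 := mul_ne_zero ha0pos.ne' hη.ne'
    rw [ha, hΦ]
    simp only [ha]
    field_simp
  · intro η hη
    have : deriv (fun t => a t * Φ t) =ᶠ[nhds η] fun _ => (0:ℝ) := by
      filter_upwards [eventually_ne_nhds hη.ne'] with t ht
      exact hderiv0 t ht
    rw [this.deriv_eq, deriv_const]
  · intro η hη
    have : deriv (fun t => a t * Φ t) =ᶠ[nhds η] fun _ => (0:ℝ) := by
      filter_upwards [eventually_ne_nhds hη.ne'] with t ht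
      exact hderiv0 t ht
    rw [this.deriv_eq, deriv_const, mul_zero]
  · intro η hη
    have haη : a0 * η ≠ 0 := mul_ne_zero ha0pos.ne' hη.ne'
    refine ⟨?_, ?_, ?_, ?_, ?_⟩ <;>
      · simp only [hΦ, hθ, hn, hσ, hE, ha]
        field_simp
        try ring
        try tauto
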